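/- Let alpha in F_{q^{mn}} with F_{q^{mn}} = F_q(alpha). For any nonzero x, y in F_{q^{mn}}, the number of m-dimensional alpha-splitting subspaces containing x equals the number of m-dimensional alpha-splitting subspaces containing y. -/

import Mathlib

open Pointwise Polynomial

/-- `W` is an `α`-splitting subspace: the whole space is the internal direct sum
`W ⊕ αW ⊕ ⋯ ⊕ α^(n-1)W`. -/
def IsSplitting {F E : Type*} [Field F] [Field E] [Algebra F E]
    (n : ℕ) (α : E) (W : Submodule F E) : Prop :=
  DirectSum.IsInternal (fun i : Fin n => α ^ (i : ℕ) • W)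

section aux
variable {F E : Type*} [Field F] [Field E] [Algebra F E]

lemma smul_eq_map' (c : E) (W : Submodule F E) :
    c • W = W.map (DistribMulAction.toLinearMap F E c) := rfl

lemma smul_eq_map_equiv (c : Eˣ) (W : Submodule F E) :
    (c : E) • W = W.map (DistribMulAction.toLinearEquiv F E c : E →ₗ[F] E) := rfl

lemma finrank_smul_eq (c : E) (hc : c ≠ 0) (W : Submodule F E) :
    Module.finrank F ↥(c • W) = Module.finrank F ↥W := by
  have h : c • W = W.map (DistribMulAction.toLinearEquiv F E (Units.mk0 c hc) : E →ₗ[F] E) := rfl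
  rw [h]
  exact LinearEquiv.finrank_map_eq _ _

lemma mem_smul_iff (c : E) (hc : c ≠ 0) (z : E) (W : Submodule F E) :
    z ∈ c • W ↔ c⁻¹ * z ∈ W := by
  rw [smul_eq_map' c W, Submodule.mem_map]
  constructor
  · rintro ⟨w, hw, rfl⟩
    simpa [DistribMulAction.toLinearMap, smul_eq_mul, ← mul_assoc, inv_mul_cancel₀ hc] using hw
  · intro h
    exact ⟨c⁻¹ * z, h, by show c * (c⁻¹ * z) = z; rw [← mul_assoc, mul_inv_cancel₀ hc, one_mul]⟩

lemma isSplitting_smul {n : ℕ} {α : E} (c : E) (hc : c ≠ 0) {W : Submodule F E}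
    (h : IsSplitting n α W) : IsSplitting n α (c • W) := by
  unfold IsSplitting at h ⊢
  have key : ∀ i : Fin n, α ^ (i : ℕ) • (c • W) = (α ^ (i : ℕ) • W).map
      (DistribMulAction.toLinearEquiv F E (Units.mk0 c hc) : E →ₗ[F] E) := by
    intro i
    rw [← smul_eq_map_equiv, Units.val_mk0, smul_smul, mul_comm, ← smul_smul]
  rw [DirectSum.isInternal_submodule_iff_iSupIndep_and_iSup_eq_top] at h ⊢
  simp_rw [key]
  constructor
  · have := h.1.map_orderIso (Submodule.orderIsoMapComap
      (DistribMulAction.toLinearEquiv F E (Units.mk0 c hc)))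
    exact this
  · rw [← Submodule.map_iSup, h.2, Submodule.map_top, LinearEquiv.range]

end aux

theorem stmt15 (F E : Type*) [Field F] [Fintype F] [Field E] [Algebra F E]
    (m n : ℕ) (hm : 0 < m) (hn : 0 < n) (hdim : Module.finrank F E = m * n)
    (α : E) (hα : Algebra.adjoin F {α} = ⊤)
    (x y : E) (hx : x ≠ 0) (hy : y ≠ 0) :
    Nat.card {W : Submodule F E // Module.finrank F W = m ∧ IsSplitting n α W ∧ x ∈ W} =
      Nat.card {W : Submodule F E // Module.finrank F W = m ∧ IsSplitting n α W ∧ y ∈ W} := by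
  have hc : y * x⁻¹ ≠ 0 := mul_ne_zero hy (inv_ne_zero hx)
  have hc' : x * y⁻¹ ≠ 0 := mul_ne_zero hx (inv_ne_zero hy)
  have hinv : (y * x⁻¹)⁻¹ = x * y⁻¹ := by field_simp [mul_comm]
  have hinv' : (x * y⁻¹)⁻¹ = y * x⁻¹ := by field_simp [mul_comm]
  refine Nat.card_eq_of_bijective (fun W => ⟨(y * x⁻¹) • W.1, ?_, ?_, ?_⟩) ?_
  · exact (finrank_smul_eq _ hc _).trans W.2.1
  · exact isSplitting_smul _ hc W.2.2.1
  · rw [mem_smul_iff _ hc, hinv]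
    have : x * y⁻¹ * y = x := by field_simp
    rw [this]; exact W.2.2.2
  · constructor
    · rintro ⟨W₁, h₁⟩ ⟨W₂, h₂⟩ h
      simp only [Subtype.mk.injEq] at h ⊢
      have h2 := congrArg (fun S => (x * y⁻¹) • S) h
      simp only [smul_smul] at h2
      have h3 : x * y⁻¹ * (y * x⁻¹) = 1 := by field_simp
      rwa [h3, one_smul, one_smul] at h2
    · rintro ⟨W, hW1, hW2, hW3⟩
      refine ⟨⟨(x * y⁻¹) • W, (finrank_smul_eq _ hc' _).trans hW1,
        isSplitting_smul _ hc' hW2, ?_⟩, ?_⟩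
      · rw [mem_smul_iff _ hc', hinv']
        have : y * x⁻¹ * x = y := by field_simp
        rw [this]; exact hW3
      · simp only [Subtype.mk.injEq]
        rw [smul_smul]
        have : y * x⁻¹ * (x * y⁻¹) = 1 := by field_simp
        rw [this, one_smul]
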